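/- arXiv:1705.08966 — 2 statements merged into one kernel-verified Lean document; each statement's English description precedes it below -/
import Mathlib

section
/- Consider the LP: minimize Σ_{ℓ=1}^r z_ℓ/(NQ) over z ∈ ℝ^r, z ≥ 0, subject to Σ z_ℓ·ℓ ≥ (K-r)NQ/K and Σ z_ℓ·ℓ² ≤ C_total − rNQ/K. If C_total ≥ r·(K-r+1)·NQ/K, then the optimal value is (K-r)/(rK), attained by z_r = (K-r)NQ/(rK), z_ℓ = 0 for ℓ < r. -/
open Finset in
/-- If the computation budget C_total is at least the CDC requirement
    r(K-r+1)NQ/K, then the lower-bound LP has optimal value (K-r)/(rK),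
    attained by z_r = (K-r)NQ/(rK) and z_ℓ = 0 for ℓ < r. -/
theorem lower_bound_LP_optimum (K r : ℕ) (N Q Ct : ℝ)
    (hK : 2 ≤ K) (hr₁ : 1 ≤ r) (hrK : r ≤ K) (hN : 0 < N) (hQ : 0 < Q)
    (hCt : (r : ℝ) * ((K : ℝ) - r + 1) * N * Q / K ≤ Ct)
    (zstar : ℕ → ℝ)
    (hzstar : ∀ ℓ : ℕ, zstar ℓ = if ℓ = r then ((K : ℝ) - r) * N * Q / ((r : ℝ) * K) else 0) :
    ((∀ ℓ : ℕ, 0 ≤ zstar ℓ) ∧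
      ((K : ℝ) - r) * N * Q / K ≤ ∑ ℓ ∈ Icc 1 r, zstar ℓ * (ℓ : ℝ) ∧
      ∑ ℓ ∈ Icc 1 r, zstar ℓ * (ℓ : ℝ) ^ 2 ≤ Ct - (r : ℝ) * N * Q / K ∧
      ∑ ℓ ∈ Icc 1 r, zstar ℓ / (N * Q) = ((K : ℝ) - r) / ((r : ℝ) * K)) ∧
    (∀ z : ℕ → ℝ, (∀ ℓ, 0 ≤ z ℓ) →
      ((K : ℝ) - r) * N * Q / K ≤ ∑ ℓ ∈ Icc 1 r, z ℓ * (ℓ : ℝ) →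
      ∑ ℓ ∈ Icc 1 r, z ℓ * (ℓ : ℝ) ^ 2 ≤ Ct - (r : ℝ) * N * Q / K →
      ((K : ℝ) - r) / ((r : ℝ) * K) ≤ ∑ ℓ ∈ Icc 1 r, z ℓ / (N * Q)) := by
  have hrpos : (0:ℝ) < (r:ℝ) := by exact_mod_cast hr₁
  have hKpos : (0:ℝ) < (K:ℝ) := by positivity
  have hKr : (0:ℝ) ≤ (K:ℝ) - r := by
    have : (r:ℝ) ≤ K := by exact_mod_cast hrK
    linarith
  have hNQ : (0:ℝ) < N * Q := by positivity
  have hmem : r ∈ Icc 1 r := by simp [hr₁]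
  have hsum : ∀ f : ℕ → ℝ, ∑ ℓ ∈ Icc 1 r, (if ℓ = r then ((K : ℝ) - r) * N * Q / ((r : ℝ) * K) else 0) * f ℓ
      = ((K : ℝ) - r) * N * Q / ((r : ℝ) * K) * f r := by
    intro f
    rw [Finset.sum_eq_single_of_mem r hmem]
    · simp
    · intro b _ hb; simp [hb]
  constructor
  · refine ⟨fun ℓ => ?_, ?_, ?_, ?_⟩
    · rw [hzstar]; split <;> positivity
    · simp only [hzstar]
      rw [hsum (fun ℓ => (ℓ:ℝ))]
      refine le_of_eq ?_
      field_simp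
    · simp only [hzstar]
      rw [hsum (fun ℓ => (ℓ:ℝ)^2)]
      rw [div_le_iff₀ hKpos] at hCt
      have : ((K : ℝ) - r) * N * Q / ((r : ℝ) * K) * (r:ℝ)^2 = (r * ((K:ℝ) - r) * N * Q) / K := by
        field_simp
      rw [this]
      rw [le_sub_iff_add_le, ← add_div, div_le_iff₀ hKpos]
      nlinarith
    · simp only [hzstar]
      have h := hsum (fun ℓ => (N*Q)⁻¹)
      have e : ∑ ℓ ∈ Icc 1 r, (if ℓ = r then ((K : ℝ) - r) * N * Q / ((r : ℝ) * K) else 0) / (N * Q)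
          = ∑ ℓ ∈ Icc 1 r, (if ℓ = r then ((K : ℝ) - r) * N * Q / ((r : ℝ) * K) else 0) * (N*Q)⁻¹ := by
        refine Finset.sum_congr rfl fun x _ => ?_
        rw [div_eq_mul_inv]
      rw [e, h]
      field_simp
  · intro z hz h1 h2
    have key : ∀ ℓ ∈ Icc 1 r, z ℓ * (ℓ:ℝ) / ((r:ℝ) * (N * Q)) ≤ z ℓ / (N * Q) := by
      intro ℓ hℓ
      simp only [Finset.mem_Icc] at hℓ
      have hℓr : (ℓ:ℝ) ≤ r := by exact_mod_cast hℓ.2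
      rw [div_le_div_iff₀ (by positivity) hNQ]
      nlinarith [mul_nonneg (mul_nonneg (hz ℓ) (sub_nonneg.2 hℓr)) hNQ.le]
    calc ((K : ℝ) - r) / ((r : ℝ) * K)
        ≤ (∑ ℓ ∈ Icc 1 r, z ℓ * (ℓ : ℝ)) / ((r:ℝ) * (N * Q)) := by
          rw [div_le_div_iff₀ (by positivity) (by positivity)]
          calc ((K:ℝ) - r) * ((r:ℝ) * (N * Q)) = (((K:ℝ) - r) * N * Q / K) * K * r := by
                field_simp
          _ ≤ (∑ ℓ ∈ Icc 1 r, z ℓ * (ℓ : ℝ)) * ((r:ℝ) * K) := by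
                nlinarith [mul_le_mul_of_nonneg_right h1 (mul_pos hKpos hrpos).le]
      _ = ∑ ℓ ∈ Icc 1 r, z ℓ * (ℓ : ℝ) / ((r:ℝ) * (N * Q)) := by
          rw [Finset.sum_div]
      _ ≤ ∑ ℓ ∈ Icc 1 r, z ℓ / (N * Q) := Finset.sum_le_sum key
end

section
/- For the LP minimizing Σ_{ℓ=1}^r z_ℓ/(NQ) subject to z ≥ 0, Σ z_ℓ·ℓ ≥ A, Σ z_ℓ·ℓ² ≤ B (with A, B > 0): any feasible z satisfies Σ z_ℓ ≥ A²/B whenever B < r·A, and Σ z_ℓ ≥ A/r always. -/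
open Finset in
/-- Any feasible z of the lower-bound LP satisfies Σ z_ℓ ≥ A²/B when B < r·A,
    and Σ z_ℓ ≥ A/r always. -/
theorem lower_bound_LP_feasible_bounds (r : ℕ) (hr : 1 ≤ r) (A B : ℝ)
    (hA : 0 < A) (hB : 0 < B) (z : ℕ → ℝ) (hz : ∀ ℓ, 0 ≤ z ℓ)
    (h1 : A ≤ ∑ ℓ ∈ Icc 1 r, z ℓ * (ℓ : ℝ))
    (h2 : ∑ ℓ ∈ Icc 1 r, z ℓ * (ℓ : ℝ) ^ 2 ≤ B) :
    (B < (r : ℝ) * A → A ^ 2 / B ≤ ∑ ℓ ∈ Icc 1 r, z ℓ) ∧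
    A / (r : ℝ) ≤ ∑ ℓ ∈ Icc 1 r, z ℓ := by
  have hS : 0 ≤ ∑ ℓ ∈ Icc 1 r, z ℓ := Finset.sum_nonneg fun ℓ _ => hz ℓ
  constructor
  · intro _
    have hcs := Finset.sum_mul_sq_le_sq_mul_sq (Icc 1 r)
      (fun ℓ => Real.sqrt (z ℓ)) (fun ℓ => Real.sqrt (z ℓ) * (ℓ : ℝ))
    have e1 : ∑ ℓ ∈ Icc 1 r, Real.sqrt (z ℓ) * (Real.sqrt (z ℓ) * (ℓ : ℝ))
        = ∑ ℓ ∈ Icc 1 r, z ℓ * (ℓ : ℝ) := by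
      refine Finset.sum_congr rfl fun ℓ _ => ?_
      rw [← mul_assoc, Real.mul_self_sqrt (hz ℓ)]
    have e2 : ∑ ℓ ∈ Icc 1 r, Real.sqrt (z ℓ) ^ 2 = ∑ ℓ ∈ Icc 1 r, z ℓ := by
      refine Finset.sum_congr rfl fun ℓ _ => Real.sq_sqrt (hz ℓ)
    have e3 : ∑ ℓ ∈ Icc 1 r, (Real.sqrt (z ℓ) * (ℓ : ℝ)) ^ 2
        = ∑ ℓ ∈ Icc 1 r, z ℓ * (ℓ : ℝ) ^ 2 := by
      refine Finset.sum_congr rfl fun ℓ _ => ?_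
      rw [mul_pow, Real.sq_sqrt (hz ℓ)]
    rw [e1, e2, e3] at hcs
    have hA2 : A ^ 2 ≤ (∑ ℓ ∈ Icc 1 r, z ℓ) * B := by
      calc A ^ 2 ≤ (∑ ℓ ∈ Icc 1 r, z ℓ * (ℓ : ℝ)) ^ 2 :=
            pow_le_pow_left₀ hA.le h1 2
        _ ≤ (∑ ℓ ∈ Icc 1 r, z ℓ) * (∑ ℓ ∈ Icc 1 r, z ℓ * (ℓ : ℝ) ^ 2) := hcs
        _ ≤ (∑ ℓ ∈ Icc 1 r, z ℓ) * B := by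
            exact mul_le_mul_of_nonneg_left h2 hS
    rw [div_le_iff₀ hB]
    exact hA2
  · have hrp : (0 : ℝ) < r := by exact_mod_cast hr
    rw [div_le_iff₀ hrp]
    calc A ≤ ∑ ℓ ∈ Icc 1 r, z ℓ * (ℓ : ℝ) := h1
      _ ≤ ∑ ℓ ∈ Icc 1 r, z ℓ * (r : ℝ) := by
          refine Finset.sum_le_sum fun ℓ hℓ => ?_
          exact mul_le_mul_of_nonneg_left (by exact_mod_cast (Finset.mem_Icc.mp hℓ).2) (hz ℓ)
      _ = (∑ ℓ ∈ Icc 1 r, z ℓ) * (r : ℝ) := by rw [Finset.sum_mul]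
end
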